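/- Let t_n be the coefficients of G(T) = T·e^T/(e^T − 1) = Σ_n t_n T^n. Then for all natural numbers m, p, q with m = p + q: C(m,p)·t_m = Σ_{n+r=m+1, p ≤ n−1} C(n,p)·t_n·t_r + Σ_{n+r=m+1, q ≤ r−1} C(r,q)·t_n·t_r, where C(·,·) denotes binomial coefficients. -/

import Mathlib

/-- The generating series `G(T) = T·e^T/(e^T − 1) = e^T · ((e^T − 1)/T)⁻¹ ∈ ℚ[[T]]`. -/
noncomputable def bernG : PowerSeries ℚ :=
  PowerSeries.exp ℚ * (PowerSeries.mk fun n => (1 : ℚ) / (n + 1).factorial)⁻¹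

/-- The coefficients `t_n` of `G(T) = Σ_n t_n T^n`. -/
noncomputable def tcoef (n : ℕ) : ℚ := PowerSeries.coeff (R := ℚ) n bernG

open PowerSeries Finset


lemma conv_aux (j k : ℕ) (f g : ℕ → ℚ) :
    ∑ n ∈ range (j+k+1), ∑ k1 ∈ range (k+1),
      (n.choose k1 : ℚ) * ((j+k-n).choose (k-k1)) * f n * g (j+k-n)
    = ∑ k1 ∈ range (k+1), ∑ j1 ∈ range (j+1),
      ((j1+k1).choose k1 : ℚ) * (((j-j1)+(k-k1)).choose (k-k1)) * f (j1+k1) * g ((j-j1)+(k-k1)) := by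
  rw [Finset.sum_comm]
  refine Finset.sum_congr rfl fun k1 hk1 => ?_
  rw [Finset.mem_range] at hk1
  have hk1' : k1 ≤ k := Nat.lt_succ_iff.mp hk1
  have h1 : ∑ n ∈ range (j+k+1), (n.choose k1 : ℚ) * ((j+k-n).choose (k-k1)) * f n * g (j+k-n)
      = ∑ n ∈ Finset.Ico k1 (j+k+1), (n.choose k1 : ℚ) * ((j+k-n).choose (k-k1)) * f n * g (j+k-n) := by
    rw [Finset.range_eq_Ico, ← Finset.sum_Ico_consecutive _ (Nat.zero_le k1) (by omega)]
    have : ∑ n ∈ Finset.Ico 0 k1, (n.choose k1 : ℚ) * ((j+k-n).choose (k-k1)) * f n * g (j+k-n) = 0 := by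
      apply Finset.sum_eq_zero
      intro n hn
      rw [Finset.mem_Ico] at hn
      rw [Nat.choose_eq_zero_of_lt hn.2]
      simp
    rw [this, zero_add]
  rw [h1, Finset.sum_Ico_eq_sum_range]
  have h2 : j + k + 1 - k1 = (j + 1) + (k - k1) := by omega
  rw [h2]
  rw [Finset.sum_range_add]
  have h3 : ∑ i ∈ range (k - k1),
      ((k1 + (j + 1 + i)).choose k1 : ℚ) * ((j+k-(k1+(j+1+i))).choose (k-k1)) * f (k1+(j+1+i)) * g (j+k-(k1+(j+1+i))) = 0 := by
    apply Finset.sum_eq_zero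
    intro i hi
    rw [Finset.mem_range] at hi
    have : (j+k-(k1+(j+1+i))).choose (k-k1) = 0 := Nat.choose_eq_zero_of_lt (by omega)
    rw [this]
    simp
  rw [h3, add_zero]
  refine Finset.sum_congr rfl fun j1 hj1 => ?_
  rw [Finset.mem_range] at hj1
  have e1 : k1 + j1 = j1 + k1 := by omega
  have e2 : j + k - (j1 + k1) = (j - j1) + (k - k1) := by omega
  rw [e1, e2]

noncomputable def phi (f : PowerSeries ℚ) : PowerSeries (PowerSeries ℚ) :=
  PowerSeries.mk fun k => PowerSeries.mk fun j =>
    ((j + k).choose k : ℚ) * PowerSeries.coeff (R := ℚ) (j + k) f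

lemma coeff_phi (f : PowerSeries ℚ) (k j : ℕ) :
    PowerSeries.coeff (R := ℚ) j (PowerSeries.coeff (R := PowerSeries ℚ) k (phi f)) =
      ((j + k).choose k : ℚ) * PowerSeries.coeff (R := ℚ) (j + k) f := by
  simp [phi]

lemma phi_add (f g : PowerSeries ℚ) : phi (f + g) = phi f + phi g := by
  ext k j
  simp [coeff_phi, mul_add]

lemma phi_one : phi 1 = 1 := by
  ext k j
  rcases k with _ | k <;> rcases j with _ | j <;>
    simp [phi, PowerSeries.coeff_one, PowerSeries.constantCoeff_mk]

lemma phi_mul (f g : PowerSeries ℚ) : phi (f * g) = phi f * phi g := by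
  ext k j
  rw [coeff_phi, PowerSeries.coeff_mul, Finset.Nat.sum_antidiagonal_eq_sum_range_succ_mk,
    Finset.mul_sum]
  rw [PowerSeries.coeff_mul, Finset.Nat.sum_antidiagonal_eq_sum_range_succ_mk, map_sum]
  have hL : ∀ n ∈ range (j+k+1), ((j+k).choose k : ℚ) * (PowerSeries.coeff (R := ℚ) n f * PowerSeries.coeff (R := ℚ) (j+k-n) g)
      = ∑ k1 ∈ range (k+1), (n.choose k1 : ℚ) * ((j+k-n).choose (k-k1)) * PowerSeries.coeff (R := ℚ) n f * PowerSeries.coeff (R := ℚ) (j+k-n) g := by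
    intro n hn
    rw [Finset.mem_range] at hn
    have hv : ((j+k).choose k : ℚ) = ∑ k1 ∈ range (k+1), (n.choose k1 : ℚ) * ((j+k-n).choose (k-k1)) := by
      have h := Nat.add_choose_eq n (j+k-n) k
      rw [Finset.Nat.sum_antidiagonal_eq_sum_range_succ_mk] at h
      have hnn : n + (j+k-n) = j+k := by omega
      rw [hnn] at h
      rw [h]
      push_cast
      rfl
    rw [hv, Finset.sum_mul]
    refine Finset.sum_congr rfl fun k1 _ => ?_
    ring
  rw [Finset.sum_congr rfl hL, conv_aux j k (fun n => PowerSeries.coeff (R := ℚ) n f) (fun n => PowerSeries.coeff (R := ℚ) n g)]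
  refine Finset.sum_congr rfl fun k1 hk1 => ?_
  rw [PowerSeries.coeff_mul, Finset.Nat.sum_antidiagonal_eq_sum_range_succ_mk]
  refine Finset.sum_congr rfl fun j1 hj1 => ?_
  rw [coeff_phi, coeff_phi]
  ring


lemma expm1 : exp ℚ - 1 = X * (PowerSeries.mk fun n => (1 : ℚ) / (n + 1).factorial) := by
  ext n
  rcases n with _ | n
  · simp [coeff_exp]
  · simp [coeff_exp, coeff_succ_X_mul, Nat.factorial_succ]

lemma key : bernG * (exp ℚ - 1) = X * exp ℚ := by
  rw [expm1, bernG]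
  have h : (PowerSeries.mk fun n => (1 : ℚ) / (n + 1).factorial)⁻¹ *
      (PowerSeries.mk fun n => (1 : ℚ) / (n + 1).factorial) = 1 := by
    apply PowerSeries.inv_mul_cancel
    simp [PowerSeries.constantCoeff_mk]
  calc PowerSeries.exp ℚ * (PowerSeries.mk fun n => (1 : ℚ) / (n + 1).factorial)⁻¹ *
      (X * PowerSeries.mk fun n => (1 : ℚ) / (n + 1).factorial)
      = X * exp ℚ * ((PowerSeries.mk fun n => (1 : ℚ) / (n + 1).factorial)⁻¹ *
        (PowerSeries.mk fun n => (1 : ℚ) / (n + 1).factorial)) := by ring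
    _ = X * exp ℚ := by rw [h, mul_one]

lemma phi_X : phi X = PowerSeries.C (R := PowerSeries ℚ) X + X := by
  ext k j
  rcases k with _ | k <;> rcases j with _ | j
  · simp [phi, PowerSeries.coeff_one]
  · rcases j with _ | j <;>
      simp [phi, PowerSeries.coeff_X, PowerSeries.coeff_C]
  · rcases k with _ | k <;>
      simp [phi, PowerSeries.coeff_X, PowerSeries.coeff_C, PowerSeries.constantCoeff_mk,
        PowerSeries.constantCoeff_X]
  · rcases k with _ | k <;> rcases j with _ | j <;>
      simp [phi, PowerSeries.coeff_X, PowerSeries.coeff_C] <;>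
      exact fun h => absurd h (by omega)

lemma phi_exp : phi (exp ℚ) =
    PowerSeries.C (R := PowerSeries ℚ) (exp ℚ) * PowerSeries.map (PowerSeries.C (R := ℚ)) (exp ℚ) := by
  ext k j
  rw [coeff_phi, PowerSeries.coeff_C_mul, PowerSeries.coeff_map, coeff_exp, PowerSeries.coeff_mul_C,
    coeff_exp, coeff_exp]
  have h : ((j+k).choose k * j.factorial * k.factorial : ℚ) = (j+k).factorial := by
    exact_mod_cast congrArg (Nat.cast : ℕ → ℚ) (Nat.add_choose_mul_factorial_mul_factorial j k)
  have hj : (j.factorial : ℚ) ≠ 0 := Nat.cast_ne_zero.mpr j.factorial_ne_zero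
  have hk : (k.factorial : ℚ) ≠ 0 := Nat.cast_ne_zero.mpr k.factorial_ne_zero
  have hjk : ((j+k).factorial : ℚ) ≠ 0 := Nat.cast_ne_zero.mpr (j+k).factorial_ne_zero
  simp only [map_div₀, map_one, map_natCast, Algebra.algebraMap_self, RingHom.id_apply]
  field_simp
  linear_combination h

section main
-- abbreviations
local notation "S" => PowerSeries (PowerSeries ℚ)
noncomputable def cx : PowerSeries (PowerSeries ℚ) := PowerSeries.C (R := PowerSeries ℚ) X
noncomputable def ex : PowerSeries (PowerSeries ℚ) := PowerSeries.C (R := PowerSeries ℚ) (exp ℚ)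
noncomputable def ey : PowerSeries (PowerSeries ℚ) := PowerSeries.map (PowerSeries.C (R := ℚ)) (exp ℚ)
noncomputable def gx : PowerSeries (PowerSeries ℚ) := PowerSeries.C (R := PowerSeries ℚ) bernG
noncomputable def gy : PowerSeries (PowerSeries ℚ) := PowerSeries.map (PowerSeries.C (R := ℚ)) bernG

lemma fact1 : gx * (ex - 1) = cx * ex := by
  have := congrArg (PowerSeries.C (R := PowerSeries ℚ)) key
  simpa [gx, ex, cx, map_mul, map_sub, map_one] using this

lemma fact2 : gy * (ey - 1) = X * ey := by
  have := congrArg (PowerSeries.map (PowerSeries.C (R := ℚ))) key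
  simpa [gy, ey, map_mul, map_sub, map_one, PowerSeries.map_X] using this

lemma phi_sub (f g : PowerSeries ℚ) : phi (f - g) = phi f - phi g := by
  have h := phi_add (f - g) g
  rw [sub_add_cancel] at h
  rw [h]; ring

lemma fact3 : phi bernG * (ex * ey - 1) = (cx + X) * (ex * ey) := by
  have h := congrArg phi key
  rw [phi_mul, phi_mul, phi_sub, phi_one, phi_X, phi_exp] at h
  unfold ex ey cx
  rw [h]

lemma exp_ne : (exp ℚ : PowerSeries ℚ) ≠ 0 := by
  intro h
  have := congrArg (PowerSeries.constantCoeff (R := ℚ)) h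
  rw [constantCoeff_exp] at this
  simp at this

lemma expm1_ne : (exp ℚ - 1 : PowerSeries ℚ) ≠ 0 := by
  intro h
  have := congrArg (PowerSeries.coeff (R := ℚ) 1) h
  rw [map_sub, coeff_exp, PowerSeries.coeff_one] at this
  norm_num at this

lemma h1 : ex - 1 ≠ 0 := by
  intro h
  have := congrArg (PowerSeries.coeff (R := PowerSeries ℚ) 0) h
  rw [map_sub, PowerSeries.coeff_zero_eq_constantCoeff] at this
  simp only [ex, PowerSeries.constantCoeff_C, map_one, map_zero] at this
  exact expm1_ne (by rw [sub_eq_zero] at this ⊢; exact_mod_cast this)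

lemma h2 : ey - 1 ≠ 0 := by
  intro h
  have := congrArg (PowerSeries.coeff (R := PowerSeries ℚ) 1) h
  rw [map_sub, PowerSeries.coeff_one] at this
  simp only [ey, PowerSeries.coeff_map, coeff_exp] at this
  norm_num at this

lemma h3 : ex * ey - 1 ≠ 0 := by
  intro h
  have := congrArg (PowerSeries.coeff (R := PowerSeries ℚ) 1) h
  rw [map_sub, PowerSeries.coeff_one] at this
  have hc : PowerSeries.coeff (R := PowerSeries ℚ) 1 (ex * ey) = exp ℚ := by
    rw [ex, PowerSeries.coeff_C_mul]
    simp only [ey, PowerSeries.coeff_map, coeff_exp]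
    norm_num
  rw [hc] at this
  norm_num at this
  exact exp_ne this

lemma main_ident : (cx + X) * gx * gy = phi bernG * (X * gx + cx * gy - cx * X) := by
  have hD : ((ex - 1) * (ey - 1) * (ex * ey - 1)) ≠ 0 :=
    mul_ne_zero (mul_ne_zero h1 h2) h3
  apply mul_right_cancel₀ hD
  linear_combination ((cx+X)*(ex*ey-1)*(gy*(ey-1)) - (cx+X)*(ex*ey)*(X*(ey-1))) * fact1
    + ((cx+X)*(ex*ey-1)*cx*ex - (cx+X)*(ex*ey)*cx*(ex-1)) * fact2
    + (-(X*gx + cx*gy - cx*X)*((ex-1)*(ey-1))) * fact3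

lemma lhs_coeff (p q : ℕ) :
    PowerSeries.coeff (R := ℚ) (p+1) (PowerSeries.coeff (R := PowerSeries ℚ) (q+1) ((cx + X) * gx * gy))
    = tcoef p * tcoef (q+1) + tcoef (p+1) * tcoef q := by
  have e : (cx + X) * gx * gy =
      PowerSeries.C (R := PowerSeries ℚ) (X * bernG) * gy + X * (PowerSeries.C (R := PowerSeries ℚ) bernG * gy) := by
    rw [cx, gx, map_mul]; ring
  rw [e, map_add, PowerSeries.coeff_C_mul, coeff_succ_X_mul, PowerSeries.coeff_C_mul]
  rw [gy, PowerSeries.coeff_map, PowerSeries.coeff_map]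
  rw [map_add, PowerSeries.coeff_mul_C, PowerSeries.coeff_mul_C, coeff_succ_X_mul]
  rfl

lemma rhs1_coeff (p q : ℕ) :
    PowerSeries.coeff (R := ℚ) (p+1) (PowerSeries.coeff (R := PowerSeries ℚ) (q+1) (phi bernG * (X * gx)))
    = ∑ a ∈ Finset.range (p+2), tcoef a * (((p+1-a)+q).choose q : ℚ) * tcoef ((p+1-a)+q) := by
  have e : phi bernG * (X * gx) = X * (PowerSeries.C (R := PowerSeries ℚ) bernG * phi bernG) := by
    rw [gx]; ring
  rw [e, coeff_succ_X_mul, PowerSeries.coeff_C_mul, PowerSeries.coeff_mul,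
    Finset.Nat.sum_antidiagonal_eq_sum_range_succ_mk]
  refine Finset.sum_congr rfl fun a ha => ?_
  rw [coeff_phi]
  rw [show p + 1 - a + q = (p+1-a) + q from rfl]
  rw [mul_assoc]
  rfl

lemma rhs2_coeff (p q : ℕ) :
    PowerSeries.coeff (R := ℚ) (p+1) (PowerSeries.coeff (R := PowerSeries ℚ) (q+1) (phi bernG * (cx * gy)))
    = ∑ k1 ∈ Finset.range (q+2), ((p+k1).choose k1 : ℚ) * tcoef (p+k1) * tcoef (q+1-k1) := by
  have e : phi bernG * (cx * gy) = PowerSeries.C (R := PowerSeries ℚ) X * (phi bernG * gy) := by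
    rw [cx]; ring
  rw [e, PowerSeries.coeff_C_mul, coeff_succ_X_mul, PowerSeries.coeff_mul,
    Finset.Nat.sum_antidiagonal_eq_sum_range_succ_mk, map_sum]
  refine Finset.sum_congr rfl fun k1 hk1 => ?_
  rw [gy, PowerSeries.coeff_map, PowerSeries.coeff_mul_C, coeff_phi]
  rfl

lemma rhs3_coeff (p q : ℕ) :
    PowerSeries.coeff (R := ℚ) (p+1) (PowerSeries.coeff (R := PowerSeries ℚ) (q+1) (phi bernG * (cx * X)))
    = ((p+q).choose q : ℚ) * tcoef (p+q) := by
  have e : phi bernG * (cx * X) = PowerSeries.C (R := PowerSeries ℚ) X * (X * phi bernG) := by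
    rw [cx]; ring
  rw [e, PowerSeries.coeff_C_mul, coeff_succ_X_mul, coeff_succ_X_mul, coeff_phi]
  rfl

lemma extract (p q : ℕ) :
    tcoef p * tcoef (q+1) + tcoef (p+1) * tcoef q
    = (∑ a ∈ Finset.range (p+2), tcoef a * (((p+1-a)+q).choose q : ℚ) * tcoef ((p+1-a)+q))
      + (∑ k1 ∈ Finset.range (q+2), ((p+k1).choose k1 : ℚ) * tcoef (p+k1) * tcoef (q+1-k1))
      - ((p+q).choose q : ℚ) * tcoef (p+q) := by
  have h := congrArg (fun F => PowerSeries.coeff (R := ℚ) (p+1) (PowerSeries.coeff (R := PowerSeries ℚ) (q+1) F)) main_ident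
  have hr : phi bernG * (X * gx + cx * gy - cx * X)
      = phi bernG * (X * gx) + phi bernG * (cx * gy) - phi bernG * (cx * X) := by ring
  rw [hr, map_sub, map_add, map_sub, map_add] at h
  rw [lhs_coeff, rhs1_coeff, rhs2_coeff, rhs3_coeff] at h
  exact h

lemma hA (p q : ℕ) :
    (∑ a ∈ Finset.range (p+2), tcoef a * (((p+1-a)+q).choose q : ℚ) * tcoef ((p+1-a)+q))
    = (∑ r ∈ (Finset.range (p+q+2)).filter (fun r => q+1 ≤ r),
        (r.choose q : ℚ) * tcoef (p+q+1-r) * tcoef r) + tcoef (p+1) * tcoef q := by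
  rw [Finset.sum_range_succ]
  congr 1
  · have hfil : (Finset.range (p+q+2)).filter (fun r => q+1 ≤ r) = Finset.Ico (q+1) (p+q+2) := by
      ext x
      simp only [Finset.mem_filter, Finset.mem_range, Finset.mem_Ico]
      omega
    rw [hfil, Finset.sum_Ico_eq_sum_range]
    have hn : p+q+2-(q+1) = p+1 := by omega
    rw [hn]
    rw [← Finset.sum_range_reflect (fun a => tcoef a * (((p+1-a)+q).choose q : ℚ) * tcoef ((p+1-a)+q)) (p+1)]
    refine Finset.sum_congr rfl fun i hi => ?_
    rw [Finset.mem_range] at hi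
    have e1 : p + 1 - 1 - i = p - i := by omega
    have e2 : p + 1 - (p - i) + q = q + 1 + i := by omega
    have e3 : p + q + 1 - (q + 1 + i) = p - i := by omega
    rw [e1, e2, e3]
    ring
  · have e : p + 1 - (p+1) + q = q := by omega
    rw [e]
    simp

lemma hB (p q : ℕ) :
    (∑ k1 ∈ Finset.range (q+2), ((p+k1).choose k1 : ℚ) * tcoef (p+k1) * tcoef (q+1-k1))
    = (∑ n ∈ (Finset.range (p+q+2)).filter (fun n => p+1 ≤ n),
        (n.choose p : ℚ) * tcoef n * tcoef (p+q+1-n)) + tcoef p * tcoef (q+1) := by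
  rw [Finset.sum_range_succ']
  congr 1
  · have hfil : (Finset.range (p+q+2)).filter (fun n => p+1 ≤ n) = Finset.Ico (p+1) (p+q+2) := by
      ext x
      simp only [Finset.mem_filter, Finset.mem_range, Finset.mem_Ico]
      omega
    rw [hfil, Finset.sum_Ico_eq_sum_range]
    have hn : p+q+2-(p+1) = q+1 := by omega
    rw [hn]
    refine Finset.sum_congr rfl fun i hi => ?_
    rw [Finset.mem_range] at hi
    have e1 : p + (i+1) = p + 1 + i := by omega
    have e2 : q + 1 - (i+1) = p + q + 1 - (p+1+i) := by omega
    have e3 : (p+1+i).choose (i+1) = (p+1+i).choose p := by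
      rw [show i + 1 = (p+1+i) - p from by omega]
      exact Nat.choose_symm (by omega)
    rw [e1, e2, e3]
  · simp

/-- for `m = p + q`,
`C(m,p)·t_m = Σ_{n+r=m+1, p ≤ n−1} C(n,p)·t_n·t_r + Σ_{n+r=m+1, q ≤ r−1} C(r,q)·t_n·t_r`. -/
theorem stmt16 (m p q : ℕ) (h : m = p + q) :
    (m.choose p : ℚ) * tcoef m =
      (∑ n ∈ (Finset.range (m + 2)).filter (fun n => p + 1 ≤ n),
        (n.choose p : ℚ) * tcoef n * tcoef (m + 1 - n)) +
      (∑ r ∈ (Finset.range (m + 2)).filter (fun r => q + 1 ≤ r),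
        (r.choose q : ℚ) * tcoef (m + 1 - r) * tcoef r) := by
  subst h
  have hext := extract p q
  rw [hA, hB] at hext
  have hsym : ((p+q).choose q : ℚ) = ((p+q).choose p : ℚ) := by
    have h0 : (p+q).choose (p+q-p) = (p+q).choose p := Nat.choose_symm (by omega)
    rw [show p+q-p = q from by omega] at h0
    exact_mod_cast congrArg (fun n : ℕ => (n : ℚ)) h0
  rw [hsym] at hext
  have h1 : ∀ n, p + q + 1 - n = (p+q) + 1 - n := fun n => rfl
  linarith [hext]
end main
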